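/- arXiv:2309.14513 — 2 statements merged into one kernel-verified Lean document; each statement's English description precedes it below -/
import Mathlib

section
/- Let D=(V,A) be a digraph and S a multiset of V. There exists a packing of spanning s-arborescences in D, one rooted at each element s of S (counted with multiplicity), if and only if d_A^-(X) ≥ |S| − |S_X| for every nonempty subset X of V. (Edmonds' theorem) -/
/- Common definitions for formalizing packing-of-arborescences theorems.

Conventions:
* A digraph on a finite vertex type `V` is given by a finite multiset of arcs
  `A : Multiset (V × V)`, an arc `(u, v)` having tail `u` and head `v`.
* An undirected (multi)graph is given by a multiset of edges `E : Multiset (V × V)`,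
  an edge being recorded as an (arbitrarily ordered) pair of its endpoints.
* A multiset `S` of vertices (e.g. of roots) is given by a finite index type `S`
  together with a placement map `π : S → V`; the multiplicity of a vertex `v` is
  the size of the fiber over `v`.
* A dypergraph is given by a multiset `𝒜 : Multiset (Finset V × V)` of dyperedges
  `(Z, z)` with tail set `Z` and head `z`; a hypergraph by a multiset
  `ℰ : Multiset (Finset V)` of hyperedges. -/

attribute [local instance] Classical.propDecidable

noncomputable section

namespace ArborPaper

variable {V : Type*} [Fintype V] [DecidableEq V]

/-- An arc `a = (u, v)` (tail `u`, head `v`) enters `X` if its head is in `X`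
and its tail is outside. -/
def arcEnters (a : V × V) (X : Finset V) : Prop := a.2 ∈ X ∧ a.1 ∉ X

/-- An undirected edge (given by a pair of endpoints) enters `X` if exactly one of
its endpoints is in `X`. -/
def edgeEnters (e : V × V) (X : Finset V) : Prop :=
  (e.1 ∈ X ∧ e.2 ∉ X) ∨ (e.2 ∈ X ∧ e.1 ∉ X)

/-- The in-degree `d⁻_A(X)` of a vertex set `X`. -/
def inDeg (A : Multiset (V × V)) (X : Finset V) : ℕ :=
  (A.filter fun a => arcEnters a X).card

/-- The in-degree of a single vertex. -/
def inDegV (A : Multiset (V × V)) (v : V) : ℕ :=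
  (A.filter fun a => a.2 = v).card

/-- Reachability by a directed path using the arcs of `A`. -/
def Reaches (A : Multiset (V × V)) (u v : V) : Prop :=
  Relation.ReflTransGen (fun x y => (x, y) ∈ A) u v

/-- `P_D^X` : the set of vertices from which some vertex of `X` is reachable. -/
def PD (A : Multiset (V × V)) (X : Finset V) : Finset V :=
  Finset.univ.filter fun u => ∃ v ∈ X, Reaches A u v

/-- `Q_D^X` : the set of vertices reachable from some vertex of `X`. -/
def QD (A : Multiset (V × V)) (X : Finset V) : Finset V :=
  Finset.univ.filter fun v => ∃ u ∈ X, Reaches A u v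

/-- `C` is a strongly connected component of the digraph `(V, A)`. -/
def IsSCCD (A : Multiset (V × V)) (C : Finset V) : Prop :=
  ∃ v : V, C = Finset.univ.filter fun u => Reaches A u v ∧ Reaches A v u

/-- `B` is an `s`-arborescence with vertex set `U` : all arcs lie inside `U`,
every vertex of `U` other than `s` has in-degree exactly `1`, the root has
in-degree `0`, and every vertex of `U` is reachable from `s`
(equivalently: no circuit and all in-degrees of non-root vertices equal `1`). -/
def IsArborOn (B : Multiset (V × V)) (U : Finset V) (s : V) : Prop :=
  s ∈ U ∧ (∀ a ∈ B, a.1 ∈ U ∧ a.2 ∈ U) ∧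
  (∀ v ∈ U, v ≠ s → inDegV B v = 1) ∧ inDegV B s = 0 ∧
  ∀ v ∈ U, Reaches B s v

/-- `B` is a spanning `s`-arborescence (vertex set all of `V`). -/
def IsSpanningArbor (B : Multiset (V × V)) (s : V) : Prop :=
  IsArborOn B Finset.univ s

/-- One step along a mixed graph: an arc of `A`, or an edge of `E` in either direction. -/
def MStep (E A : Multiset (V × V)) (u v : V) : Prop :=
  (u, v) ∈ A ∨ (u, v) ∈ E ∨ (v, u) ∈ E

/-- Reachability by a mixed path in the mixed graph `(V, E ∪ A)`. -/
def MReaches (E A : Multiset (V × V)) (u v : V) : Prop :=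
  Relation.ReflTransGen (MStep E A) u v

/-- `P_F^X` for a mixed graph `F = (V, E ∪ A)`. -/
def PF (E A : Multiset (V × V)) (X : Finset V) : Finset V :=
  Finset.univ.filter fun u => ∃ v ∈ X, MReaches E A u v

/-- `Q_F^X` for a mixed graph `F = (V, E ∪ A)`. -/
def QF (E A : Multiset (V × V)) (X : Finset V) : Finset V :=
  Finset.univ.filter fun v => ∃ u ∈ X, MReaches E A u v

/-- `C` is a strongly connected component of the mixed graph `(V, E ∪ A)`. -/
def IsSCC (E A : Multiset (V × V)) (C : Finset V) : Prop :=
  ∃ v : V, C = Finset.univ.filter fun u => MReaches E A u v ∧ MReaches E A v u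

/-- `e_{E∪A}(𝒫)` : the number of edges of `E` and arcs of `A` entering at least one
member of the family `P`. -/
def eMixed (E A : Multiset (V × V)) (P : Finset (Finset V)) : ℕ :=
  (E.filter fun e => ∃ X ∈ P, edgeEnters e X).card +
  (A.filter fun a => ∃ X ∈ P, arcEnters a X).card

/-- A subpartition of `V` : a set of pairwise disjoint nonempty subsets. -/
def IsSubpartition (P : Finset (Finset V)) : Prop :=
  (∀ X ∈ P, X.Nonempty) ∧ ∀ X ∈ P, ∀ Y ∈ P, X ≠ Y → Disjoint X Y

/-- `Eo` is an orientation of the multiset `E` of undirected edges: each edge is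
kept or swapped. -/
def IsOrientationOf (E Eo : Multiset (V × V)) : Prop :=
  Multiset.Rel (fun e a => a = e ∨ a = Prod.swap e) E Eo

/-- The rank function of a matroid on a finite ground type `S`. -/
structure RankFn (S : Type*) [Fintype S] [DecidableEq S] where
  r : Finset S → ℕ
  rank_le_card : ∀ X : Finset S, r X ≤ X.card
  mono : ∀ ⦃X Y : Finset S⦄, X ⊆ Y → r X ≤ r Y
  submodular : ∀ X Y : Finset S, r (X ∪ Y) + r (X ∩ Y) ≤ r X + r Y

/-- `B` is a basis of `T` in the matroid with rank function `M` : an independent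
subset of `T` of full rank in `T`. -/
def RankFn.IsBasisOf {S : Type*} [Fintype S] [DecidableEq S] (M : RankFn S)
    (B T : Finset S) : Prop :=
  B ⊆ T ∧ M.r B = B.card ∧ M.r B = M.r T

/-- A dyperedge `a = (Z, z)` enters `X` if its head `z` is in `X` and some tail
vertex lies outside `X`. -/
def dypEnters (a : Finset V × V) (X : Finset V) : Prop :=
  a.2 ∈ X ∧ (a.1 \ X).Nonempty

/-- The in-degree `d⁻_𝒜(X)` in a dypergraph. -/
def dypInDeg (𝒜 : Multiset (Finset V × V)) (X : Finset V) : ℕ :=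
  (𝒜.filter fun a => dypEnters a X).card

/-- A hyperedge `e` enters `X` if it meets both `X` and its complement. -/
def hypEnters (e X : Finset V) : Prop := (e ∩ X).Nonempty ∧ (e \ X).Nonempty

/-- `e_{ℰ∪𝒜}(𝒫)` for a mixed hypergraph: the number of hyperedges of `ℰ` and
dyperedges of `𝒜` entering at least one member of `P`. -/
def eMH (ℰ : Multiset (Finset V)) (𝒜 : Multiset (Finset V × V))
    (P : Finset (Finset V)) : ℕ :=
  (ℰ.filter fun e => ∃ X ∈ P, hypEnters e X).card +
  (𝒜.filter fun a => ∃ X ∈ P, dypEnters a X).card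

/-- `B` is obtained from the multiset `𝒵` of dyperedges by trimming each
dyperedge `(Z, z)` to an arc `(y, z)` with `y ∈ Z`. -/
def Trims (𝒵 : Multiset (Finset V × V)) (B : Multiset (V × V)) : Prop :=
  Multiset.Rel (fun a b => b.2 = a.2 ∧ b.1 ∈ a.1) 𝒵 B

/-- `𝒟` is an orientation of the multiset `ℰ` of hyperedges: each hyperedge `X`
is replaced by a dyperedge `(X − x, x)` for some `x ∈ X`. -/
def Orients (ℰ : Multiset (Finset V)) (𝒟 : Multiset (Finset V × V)) : Prop :=
  Multiset.Rel (fun e a => a.2 ∈ e ∧ a.1 = e.erase a.2) ℰ 𝒟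

section EdmondsProof

set_option linter.unusedSectionVars false

variable {V : Type} [Fintype V] [DecidableEq V]

private def outR (R : Multiset V) (X : Finset V) : ℕ :=
  (R.filter fun v => v ∉ X).card

private lemma inDeg_add (C D : Multiset (V × V)) (X : Finset V) :
    inDeg (C + D) X = inDeg C X + inDeg D X := by
  simp [inDeg, Multiset.filter_add]

private lemma inDeg_singleton (a : V × V) (X : Finset V) :
    inDeg ({a} : Multiset (V × V)) X = if arcEnters a X then 1 else 0 := by
  simp only [inDeg, Multiset.filter_singleton]
  split <;> simp

private lemma inDeg_mono {C D : Multiset (V × V)} (h : C ≤ D) (X : Finset V) :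
    inDeg C X ≤ inDeg D X :=
  Multiset.card_le_card (Multiset.filter_le_filter _ h)

private lemma inDegV_add (C D : Multiset (V × V)) (v : V) :
    inDegV (C + D) v = inDegV C v + inDegV D v := by
  simp [inDegV, Multiset.filter_add]

private lemma inDegV_singleton (a : V × V) (v : V) :
    inDegV ({a} : Multiset (V × V)) v = if a.2 = v then 1 else 0 := by
  simp only [inDegV, Multiset.filter_singleton]
  split <;> simp

private lemma inDeg_submod (C : Multiset (V × V)) (X Y : Finset V) :
    inDeg C (X ∪ Y) + inDeg C (X ∩ Y) ≤ inDeg C X + inDeg C Y := by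
  induction C using Multiset.induction_on with
  | empty => simp [inDeg]
  | cons a C ih =>
    simp only [inDeg, Multiset.filter_cons, Multiset.card_add] at *
    have h1 : ∀ (p : Prop) [Decidable p],
        (if p then ({a} : Multiset (V × V)) else 0).card = if p then 1 else 0 := by
      intro p _; split <;> simp
    rw [h1, h1, h1, h1]
    have : (if arcEnters a (X ∪ Y) then 1 else 0) + (if arcEnters a (X ∩ Y) then 1 else 0)
        ≤ (if arcEnters a X then 1 else 0) + (if arcEnters a Y then 1 else 0) := by
      simp only [arcEnters, Finset.mem_union, Finset.mem_inter]
      by_cases hx1 : a.2 ∈ X <;> by_cases hx2 : a.2 ∈ Y <;> by_cases hx3 : a.1 ∈ X <;>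
        by_cases hx4 : a.1 ∈ Y <;> simp [hx1, hx2, hx3, hx4]
    omega

private lemma outR_modular (R : Multiset V) (X Y : Finset V) :
    outR R (X ∪ Y) + outR R (X ∩ Y) = outR R X + outR R Y := by
  induction R using Multiset.induction_on with
  | empty => simp [outR]
  | cons v R ih =>
    simp only [outR, Multiset.filter_cons, Multiset.card_add] at *
    have h1 : ∀ (p : Prop) [Decidable p],
        (if p then ({v} : Multiset V) else 0).card = if p then 1 else 0 := by
      intro p _; split <;> simp
    rw [h1, h1, h1, h1]
    have : (if v ∉ X ∪ Y then 1 else 0) + (if v ∉ X ∩ Y then 1 else 0)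
        = (if v ∉ X then 1 else 0) + (if v ∉ Y then 1 else 0) := by
      simp only [Finset.mem_union, Finset.mem_inter]
      split_ifs <;> first | omega | tauto
    omega

private lemma outR_anti (R : Multiset V) {Z X : Finset V} (h : Z ⊆ X) :
    outR R X ≤ outR R Z := by
  induction R using Multiset.induction_on with
  | empty => simp [outR]
  | cons v R ih =>
    simp only [outR, Multiset.filter_cons, Multiset.card_add] at *
    have h1 : ∀ (p : Prop) [Decidable p],
        (if p then ({v} : Multiset V) else 0).card = if p then 1 else 0 := by
      intro p _; split <;> simp
    rw [h1, h1]
    have hZX : v ∈ Z → v ∈ X := fun hz => h hz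
    have : (if v ∉ X then 1 else 0) ≤ if v ∉ Z then 1 else 0 := by
      split_ifs <;> first | omega | tauto
    omega

/-- Arcs entering `Z ⊆ X` either enter `X` or come from `X \ Z`. -/
private lemma inDeg_split (C : Multiset (V × V)) {Z X : Finset V} (hZX : Z ⊆ X) :
    inDeg C Z ≤ inDeg C X +
      (C.filter fun a => a.2 ∈ Z ∧ a.1 ∈ X ∧ a.1 ∉ Z).card := by
  induction C using Multiset.induction_on with
  | empty => simp [inDeg]
  | cons a C ih =>
    simp only [inDeg, Multiset.filter_cons, Multiset.card_add] at *
    have h1 : ∀ (p : Prop) [Decidable p],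
        (if p then ({a} : Multiset (V × V)) else 0).card = if p then 1 else 0 := by
      intro p _; split <;> simp
    rw [h1, h1, h1]
    have hZX2 : a.2 ∈ Z → a.2 ∈ X := fun hz => hZX hz
    have : (if arcEnters a Z then 1 else 0) ≤ (if arcEnters a X then 1 else 0)
        + (if a.2 ∈ Z ∧ a.1 ∈ X ∧ a.1 ∉ Z then 1 else 0) := by
      simp only [arcEnters]
      by_cases hx1 : a.2 ∈ Z <;> by_cases hx2 : a.2 ∈ X <;> by_cases hx3 : a.1 ∈ Z <;>
        by_cases hx4 : a.1 ∈ X <;> simp_all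
    omega

private lemma reaches_mono {C D : Multiset (V × V)} (h : C ≤ D) {u v : V}
    (hr : Reaches C u v) : Reaches D u v :=
  Relation.ReflTransGen.mono (fun _ _ hxy => Multiset.mem_of_le h hxy) u v hr

private lemma one_le_inDeg_of_reaches {C : Multiset (V × V)} {u v : V} {X : Finset V}
    (h : Reaches C u v) (hu : u ∉ X) : v ∈ X → 1 ≤ inDeg C X := by
  induction h with
  | refl => exact fun hv => absurd hv hu
  | tail h1 h2 ih =>
    intro hv
    rename_i b c
    by_cases hb : b ∈ X
    · exact ih hb
    · have : (b, c) ∈ C.filter fun a => arcEnters a X :=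
        Multiset.mem_filter.2 ⟨h2, hv, hb⟩
      have hpos : 0 < (C.filter fun a => arcEnters a X).card :=
        Multiset.card_pos.2 (fun h0 => by simp [h0] at this)
      exact hpos

private lemma inDeg_sub_add {A B : Multiset (V × V)} (h : B ≤ A) (X : Finset V) :
    inDeg A X = inDeg (A - B) X + inDeg B X := by
  conv_lhs => rw [← tsub_add_cancel_of_le h]
  exact inDeg_add _ _ _

/-- If `X` avoids `U` and all arcs of `B` head into `U`, then removing `B`
does not change the in-degree of `X`: min-cut-preservation for uncovered sets. -/
private lemma uncovered_indeg {A B : Multiset (V × V)} {R' : Multiset V} {s : V} {U : Finset V}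
    (hBA : B ≤ A) (hsU : s ∈ U) (hheads : ∀ a ∈ B, a.2 ∈ U)
    (hcutA : ∀ X : Finset V, X.Nonempty →
      (if s ∉ X then 1 else 0) + outR R' X ≤ inDeg A X)
    {Z : Finset V} (hZ : Z.Nonempty) (hZU : ∀ v ∈ Z, v ∉ U) :
    outR R' Z + 1 ≤ inDeg (A - B) Z := by
  have hB0 : inDeg B Z = 0 := by
    simp only [inDeg, Multiset.card_eq_zero, Multiset.filter_eq_nil]
    intro a ha hent
    exact hZU a.2 hent.1 (hheads a ha)
  have hsZ : s ∉ Z := fun hs => hZU s hs hsU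
  have := hcutA Z hZ
  rw [if_pos hsZ] at this
  have h2 := inDeg_sub_add hBA Z
  omega

private lemma exists_good_arc {A B : Multiset (V × V)} {R' : Multiset V} {s : V} {U : Finset V}
    (hBA : B ≤ A) (hsU : s ∈ U) (hheads : ∀ a ∈ B, a.2 ∈ U) (hU : U ≠ Finset.univ)
    (hcutA : ∀ X : Finset V, X.Nonempty →
      (if s ∉ X then 1 else 0) + outR R' X ≤ inDeg A X)
    (hcutB : ∀ X : Finset V, X.Nonempty → outR R' X ≤ inDeg (A - B) X) :
    ∃ a ∈ A - B, a.1 ∈ U ∧ a.2 ∉ U ∧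
      ∀ X : Finset V, X.Nonempty → outR R' X ≤ inDeg (A - B - {a}) X := by
  -- it suffices to find a "good" arc from U to V \ U
  suffices h : ∃ a ∈ A - B, a.1 ∈ U ∧ a.2 ∉ U ∧
      ∀ X : Finset V, X.Nonempty → arcEnters a X → outR R' X + 1 ≤ inDeg (A - B) X by
    obtain ⟨a, ha, h1, h2, hgood⟩ := h
    refine ⟨a, ha, h1, h2, fun X hX => ?_⟩
    have hsplit : inDeg (A - B) X = inDeg (A - B - {a}) X + inDeg ({a} : Multiset (V × V)) X :=
      inDeg_sub_add (Multiset.singleton_le.mpr ha) X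
    rw [inDeg_singleton] at hsplit
    by_cases hent : arcEnters a X
    · have := hgood X hX hent
      rw [if_pos hent] at hsplit
      omega
    · rw [if_neg hent] at hsplit
      have := hcutB X hX
      omega
  -- tight sets meeting V \ U
  set T : Finset (Finset V) :=
    Finset.univ.filter (fun X : Finset V =>
      X.Nonempty ∧ (X \ U).Nonempty ∧ inDeg (A - B) X ≤ outR R' X) with hT
  by_cases hTe : T.Nonempty
  · -- take a tight set X₀ of minimum cardinality
    obtain ⟨X₀, hX₀T, hmin⟩ := T.exists_min_image Finset.card hTe
    have hX₀ := (Finset.mem_filter.mp hX₀T).2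
    obtain ⟨hX₀ne, hX₀W, hX₀tight⟩ := hX₀
    set Z : Finset V := X₀ \ U with hZdef
    have hZne : Z.Nonempty := hX₀W
    have hZX : Z ⊆ X₀ := Finset.sdiff_subset
    have hkey : outR R' Z + 1 ≤ inDeg (A - B) Z :=
      uncovered_indeg hBA hsU hheads hcutA hZne (fun v hv => (Finset.mem_sdiff.mp hv).2)
    have hanti : outR R' X₀ ≤ outR R' Z := outR_anti R' hZX
    have hsplit := inDeg_split (A - B) hZX
    have hM : 1 ≤ ((A - B).filter fun a => a.2 ∈ Z ∧ a.1 ∈ X₀ ∧ a.1 ∉ Z).card := by omega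
    obtain ⟨a, ha⟩ := Multiset.card_pos_iff_exists_mem.mp hM
    rw [Multiset.mem_filter] at ha
    obtain ⟨haAB, ha2Z, ha1X, ha1Z⟩ := ha
    have ha2U : a.2 ∉ U := (Finset.mem_sdiff.mp ha2Z).2
    have ha1U : a.1 ∈ U := by
      by_contra h1
      exact ha1Z (Finset.mem_sdiff.mpr ⟨ha1X, h1⟩)
    refine ⟨a, haAB, ha1U, ha2U, fun Y hY hent => ?_⟩
    by_contra hbad
    push_neg at hbad
    have hYtight : inDeg (A - B) Y ≤ outR R' Y := by omega
    -- X₀ ∩ Y is tight, meets V \ U and is smaller than X₀ — contradiction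
    have ha2X : a.2 ∈ X₀ := hZX ha2Z
    have hIne : (X₀ ∩ Y).Nonempty := ⟨a.2, Finset.mem_inter.mpr ⟨ha2X, hent.1⟩⟩
    have hIW : ((X₀ ∩ Y) \ U).Nonempty :=
      ⟨a.2, Finset.mem_sdiff.mpr ⟨Finset.mem_inter.mpr ⟨ha2X, hent.1⟩, ha2U⟩⟩
    have hItight : inDeg (A - B) (X₀ ∩ Y) ≤ outR R' (X₀ ∩ Y) := by
      have hsub := inDeg_submod (A - B) X₀ Y
      have hmod := outR_modular R' X₀ Y
      have hUcut : outR R' (X₀ ∪ Y) ≤ inDeg (A - B) (X₀ ∪ Y) :=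
        hcutB _ (hX₀ne.mono Finset.subset_union_left)
      omega
    have hIT : X₀ ∩ Y ∈ T :=
      Finset.mem_filter.mpr ⟨Finset.mem_univ _, hIne, hIW, hItight⟩
    have hIX : X₀ ∩ Y = X₀ := by
      apply Finset.eq_of_subset_of_card_le Finset.inter_subset_left
      exact hmin _ hIT
    have hXY : X₀ ⊆ Y := by
      rw [← hIX]; exact Finset.inter_subset_right
    exact hent.2 (hXY ha1X)
  · -- no tight set: any arc entering V \ U will do
    have hWne : (Finset.univ \ U).Nonempty := by
      rw [Finset.sdiff_nonempty]
      exact fun h => hU (Finset.univ_subset_iff.mp h)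
    have hkey : outR R' (Finset.univ \ U) + 1 ≤ inDeg (A - B) (Finset.univ \ U) :=
      uncovered_indeg hBA hsU hheads hcutA hWne (fun v hv => (Finset.mem_sdiff.mp hv).2)
    have hM : 1 ≤ ((A - B).filter fun a => arcEnters a (Finset.univ \ U)).card := by
      have : inDeg (A - B) (Finset.univ \ U)
          = ((A - B).filter fun a => arcEnters a (Finset.univ \ U)).card := rfl
      omega
    obtain ⟨a, ha⟩ := Multiset.card_pos_iff_exists_mem.mp hM
    rw [Multiset.mem_filter] at ha
    obtain ⟨haAB, hent⟩ := ha
    have ha2U : a.2 ∉ U := (Finset.mem_sdiff.mp hent.1).2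
    have ha1U : a.1 ∈ U := by
      by_contra h1
      exact hent.2 (Finset.mem_sdiff.mpr ⟨Finset.mem_univ _, h1⟩)
    refine ⟨a, haAB, ha1U, ha2U, fun Y hY henta => ?_⟩
    by_contra hbad
    push_neg at hbad
    have : Y ∈ T := Finset.mem_filter.mpr ⟨Finset.mem_univ _, hY,
      ⟨a.2, Finset.mem_sdiff.mpr ⟨henta.1, ha2U⟩⟩, by omega⟩
    exact hTe ⟨Y, this⟩

private lemma grow (A : Multiset (V × V)) (R' : Multiset V) (s : V)
    (hcutA : ∀ X : Finset V, X.Nonempty →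
      (if s ∉ X then 1 else 0) + outR R' X ≤ inDeg A X) :
    ∀ (n : ℕ) (B : Multiset (V × V)) (U : Finset V), (Finset.univ \ U).card ≤ n →
      B ≤ A → IsArborOn B U s →
      (∀ X : Finset V, X.Nonempty → outR R' X ≤ inDeg (A - B) X) →
      ∃ B', B' ≤ A ∧ IsSpanningArbor B' s ∧
        ∀ X : Finset V, X.Nonempty → outR R' X ≤ inDeg (A - B') X := by
  intro n
  induction n with
  | zero =>
    intro B U hcard hBA harb hcutB
    have hU : U = Finset.univ := by
      have h1 : Finset.univ \ U = ∅ := Finset.card_eq_zero.mp (Nat.le_zero.mp hcard)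
      exact Finset.univ_subset_iff.mp (Finset.sdiff_eq_empty_iff_subset.mp h1)
    subst hU
    exact ⟨B, hBA, harb, hcutB⟩
  | succ n ih =>
    intro B U hcard hBA harb hcutB
    by_cases hU : U = Finset.univ
    · subst hU
      exact ⟨B, hBA, harb, hcutB⟩
    obtain ⟨hsU, harcs, hdeg1, hdeg0, hreach⟩ := harb
    obtain ⟨a, haAB, ha1U, ha2U, hacut⟩ :=
      exists_good_arc hBA hsU (fun b hb => (harcs b hb).2) hU hcutA hcutB
    set B₁ := B + {a} with hB₁
    have hB₁A : B₁ ≤ A := by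
      have h1 : ({a} : Multiset (V × V)) ≤ A - B := Multiset.singleton_le.mpr haAB
      calc B + {a} ≤ B + (A - B) := add_le_add_right h1 B
        _ = A := add_tsub_cancel_of_le hBA
    have hsub : A - B₁ = A - B - {a} := (tsub_tsub A B {a}).symm
    have hcard' : (Finset.univ \ insert a.2 U).card ≤ n := by
      have ha2W : a.2 ∈ Finset.univ \ U := Finset.mem_sdiff.mpr ⟨Finset.mem_univ _, ha2U⟩
      rw [Finset.sdiff_insert, Finset.card_erase_of_mem ha2W]
      omega
    have harb' : IsArborOn B₁ (insert a.2 U) s := by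
      refine ⟨Finset.mem_insert_of_mem hsU, ?_, ?_, ?_, ?_⟩
      · intro b hb
        rw [hB₁, Multiset.mem_add] at hb
        rcases hb with hb | hb
        · exact ⟨Finset.mem_insert_of_mem (harcs b hb).1,
            Finset.mem_insert_of_mem (harcs b hb).2⟩
        · rw [Multiset.mem_singleton] at hb
          subst hb
          exact ⟨Finset.mem_insert_of_mem ha1U, Finset.mem_insert_self _ _⟩
      · intro v hv hvs
        rw [hB₁, inDegV_add, inDegV_singleton]
        by_cases hva : v = a.2
        · have h0 : inDegV B a.2 = 0 := by
            simp only [inDegV, Multiset.card_eq_zero, Multiset.filter_eq_nil]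
            intro b hb hb2
            exact ha2U (hb2 ▸ (harcs b hb).2)
          rw [hva, h0, if_pos rfl]
        · have hvU : v ∈ U := by
            rcases Finset.mem_insert.mp hv with h | h
            · exact absurd h hva
            · exact h
          rw [if_neg (fun h => hva h.symm), hdeg1 v hvU hvs]
      · rw [hB₁, inDegV_add, inDegV_singleton, hdeg0,
          if_neg (fun h : a.2 = s => ha2U (by rw [h]; exact hsU))]
      · intro v hv
        rcases Finset.mem_insert.mp hv with h | h
        · subst h
          have h1 : Reaches B₁ s a.1 :=
            reaches_mono (Multiset.le_add_right _ _) (hreach a.1 ha1U)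
          exact h1.tail (by rw [hB₁, Multiset.mem_add]; right; simp)
        · exact reaches_mono (Multiset.le_add_right _ _) (hreach v h)
    exact ih B₁ (insert a.2 U) hcard' hB₁A harb'
      (fun X hX => by rw [hsub]; exact hacut X hX)

private lemma inDeg_sum {ι : Type*} (t : Finset ι) (f : ι → Multiset (V × V)) (X : Finset V) :
    inDeg (∑ i ∈ t, f i) X = ∑ i ∈ t, inDeg (f i) X := by
  induction t using Finset.cons_induction with
  | empty => simp [inDeg]
  | cons a t ha ih => rw [Finset.sum_cons, Finset.sum_cons, inDeg_add, ih]


private lemma packing_fin : ∀ (n : ℕ) (ρ : Fin n → V) (A : Multiset (V × V)),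
    (∀ X : Finset V, X.Nonempty →
      (Finset.univ.filter fun i => ρ i ∉ X).card ≤ inDeg A X) →
    ∃ B : Fin n → Multiset (V × V), (∑ i, B i) ≤ A ∧
      ∀ i, IsSpanningArbor (B i) (ρ i) := by
  intro n
  induction n with
  | zero => exact fun ρ A _ => ⟨fun _ => 0, by simp, fun i => i.elim0⟩
  | succ n ih =>
    intro ρ A hcut
    set R' : Multiset V := Finset.univ.val.map (fun i : Fin n => ρ i.succ) with hR'
    have hout : ∀ X : Finset V,
        outR R' X = (Finset.univ.filter fun i : Fin n => ρ i.succ ∉ X).card := by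
      intro X
      show (Multiset.filter (fun v => v ∉ X)
        (Multiset.map (fun i : Fin n => ρ i.succ) Finset.univ.val)).card = _
      rw [Multiset.filter_map, Multiset.card_map]
      have h2 : (Finset.univ.filter fun i : Fin n => ρ i.succ ∉ X).card
          = (Multiset.filter (fun i : Fin n => ρ i.succ ∉ X) Finset.univ.val).card := rfl
      rw [h2]
      exact congrArg Multiset.card (Multiset.filter_congr (fun x _ => Iff.rfl))
    have hsucc : ∀ X : Finset V,
        ((Finset.univ.filter fun i : Fin (n + 1) => ρ i ∉ X).card : ℕ)
          = (if ρ 0 ∉ X then 1 else 0)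
            + (Finset.univ.filter fun i : Fin n => ρ i.succ ∉ X).card := by
      intro X
      rw [Finset.card_filter, Finset.card_filter, Fin.sum_univ_succ]
    have hcA : ∀ X : Finset V, X.Nonempty →
        (if ρ 0 ∉ X then 1 else 0) + outR R' X ≤ inDeg A X := by
      intro X hX
      rw [hout, ← hsucc X]
      exact hcut X hX
    have harb0 : IsArborOn (0 : Multiset (V × V)) {ρ 0} (ρ 0) := by
      refine ⟨Finset.mem_singleton_self _, by simp, ?_, by simp [inDegV], ?_⟩
      · intro v hv hvs
        exact absurd (Finset.mem_singleton.mp hv) hvs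
      · intro v hv
        rw [Finset.mem_singleton] at hv
        subst hv
        exact Relation.ReflTransGen.refl
    obtain ⟨B₀, hB₀A, hB₀arb, hB₀cut⟩ := grow A R' (ρ 0) hcA
      (Finset.univ \ {ρ 0}).card 0 {ρ 0} le_rfl zero_le harb0
      (fun X hX => by
        rw [tsub_zero]
        have := hcA X hX
        omega)
    obtain ⟨Bs, hBsA, hBsarb⟩ := ih (fun i => ρ i.succ) (A - B₀)
      (fun X hX => by rw [← hout]; exact hB₀cut X hX)
    refine ⟨Fin.cases B₀ Bs, ?_, ?_⟩
    · rw [Fin.sum_univ_succ]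
      simp only [Fin.cases_zero, Fin.cases_succ]
      calc B₀ + ∑ i : Fin n, Bs i ≤ B₀ + (A - B₀) := add_le_add_right hBsA B₀
        _ = A := add_tsub_cancel_of_le hB₀A
    · intro i
      induction i using Fin.cases with
      | zero => simpa using hB₀arb
      | succ j => simpa using hBsarb j

end EdmondsProof

/-- **Edmonds' theorem.** Let `D = (V, A)` be a digraph and `S` a multiset of `V`
(given by an index type `S` with placement `π`). There is a packing of spanning
`s`-arborescences, one rooted at each element `s` of `S`, iff
`d⁻_A(X) ≥ |S| − |S_X|` for every nonempty `X ⊆ V`. -/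
theorem edmonds_packing_spanning_arborescences
    (V : Type) [Fintype V] [DecidableEq V]
    (A : Multiset (V × V)) (hA : ∀ a ∈ A, a.1 ≠ a.2)
    (S : Type) [Fintype S] [DecidableEq S] (π : S → V) :
    (∃ B : S → Multiset (V × V),
        (∑ s : S, B s) ≤ A ∧ ∀ s : S, IsSpanningArbor (B s) (π s)) ↔
    ∀ X : Finset V, X.Nonempty →
      (Fintype.card S : ℤ) - (Finset.univ.filter fun s => π s ∈ X).card
        ≤ (inDeg A X : ℤ) := by
  constructor
  · rintro ⟨B, hBA, hBarb⟩ X hX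
    obtain ⟨v, hv⟩ := hX
    have hnat : (Finset.univ.filter fun s => π s ∉ X).card ≤ inDeg A X := by
      have h1 : ∀ s : S, (if π s ∉ X then 1 else 0) ≤ inDeg (B s) X := by
        intro s
        split_ifs with hs
        · exact Nat.zero_le _
        · exact one_le_inDeg_of_reaches ((hBarb s).2.2.2.2 v (Finset.mem_univ v)) hs hv
      calc (Finset.univ.filter fun s => π s ∉ X).card
          = ∑ s : S, (if π s ∉ X then 1 else 0) := Finset.card_filter _ _
        _ ≤ ∑ s : S, inDeg (B s) X := Finset.sum_le_sum (fun s _ => h1 s)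
        _ = inDeg (∑ s, B s) X := (inDeg_sum _ _ _).symm
        _ ≤ inDeg A X := inDeg_mono hBA X
    have hcards :=
      Finset.card_filter_add_card_filter_not
        (s := (Finset.univ : Finset S)) (p := fun s : S => π s ∈ X)
    rw [Finset.card_univ] at hcards
    omega
  · intro h
    have hnat : ∀ X : Finset V, X.Nonempty →
        (Finset.univ.filter fun s => π s ∉ X).card ≤ inDeg A X := by
      intro X hX
      have h1 := h X hX
      have hcards :=
        Finset.card_filter_add_card_filter_not
          (s := (Finset.univ : Finset S)) (p := fun s : S => π s ∈ X)
      rw [Finset.card_univ] at hcards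
      omega
    set e := Fintype.equivFin S with he
    have hcnt : ∀ X : Finset V,
        (Finset.univ.filter fun i : Fin (Fintype.card S) => π (e.symm i) ∉ X).card
          = (Finset.univ.filter fun s : S => π s ∉ X).card := by
      intro X
      apply Finset.card_bij (fun i _ => e.symm i)
      · intro i hi
        simp only [Finset.mem_filter, Finset.mem_univ, true_and] at hi ⊢
        exact hi
      · intro i _ j _ hij
        exact e.symm.injective hij
      · intro s hs
        simp only [Finset.mem_filter, Finset.mem_univ, true_and] at hs ⊢
        exact ⟨e s, by simpa using hs, by simp⟩
    obtain ⟨Bf, hBfA, hBfarb⟩ := packing_fin (Fintype.card S) (fun i => π (e.symm i)) A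
      (fun X hX => by rw [hcnt]; exact hnat X hX)
    refine ⟨fun s => Bf (e s), ?_, fun s => by simpa using hBfarb (e s)⟩
    have hsum : ∑ s : S, Bf (e s) = ∑ i, Bf i :=
      Fintype.sum_equiv e _ _ (fun s => rfl)
    rw [hsum]
    exact hBfA

end ArborPaper
end
end

section
/- Let D=(V,A) be a digraph, S a multiset of V and M=(S,r_M) a matroid on S. Then the following two conditions are equivalent: (i) d_A^-(X) ≥ r_M(S_{P_D^X}) − r_M(S_X) for every subset X of V; (ii) for every strongly connected component C of D and every subset X of P_D^C with X∩C ≠ ∅ and d_A^-(X−C)=0, d_A^-(X) ≥ r_M(S_{P_D^C}) − r_M(S_X). -/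
/- Common definitions for formalizing packing-of-arborescences theorems.

Conventions:
* A digraph on a finite vertex type `V` is given by a finite multiset of arcs
  `A : Multiset (V × V)`, an arc `(u, v)` having tail `u` and head `v`.
* An undirected (multi)graph is given by a multiset of edges `E : Multiset (V × V)`,
  an edge being recorded as an (arbitrarily ordered) pair of its endpoints.
* A multiset `S` of vertices (e.g. of roots) is given by a finite index type `S`
  together with a placement map `π : S → V`; the multiplicity of a vertex `v` is
  the size of the fiber over `v`.
* A dypergraph is given by a multiset `𝒜 : Multiset (Finset V × V)` of dyperedges
  `(Z, z)` with tail set `Z` and head `z`; a hypergraph by a multiset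
  `ℰ : Multiset (Finset V)` of hyperedges. -/

attribute [local instance] Classical.propDecidable

noncomputable section

namespace ArborPaper

variable {V : Type*} [Fintype V] [DecidableEq V]

/-! ### Auxiliary lemmas for the proof of the Király–Gao–Yang equivalence -/

private lemma mem_PD' {A : Multiset (V × V)} {X : Finset V} {u : V} :
    u ∈ PD A X ↔ ∃ v ∈ X, Reaches A u v := by
  simp [PD]

private lemma mem_QD' {A : Multiset (V × V)} {X : Finset V} {v : V} :
    v ∈ QD A X ↔ ∃ u ∈ X, Reaches A u v := by
  simp [QD]

private lemma count_aux {α : Type*} (A : Multiset α) (p1 p2 p : α → Prop)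
    [DecidablePred p1] [DecidablePred p2] [DecidablePred p]
    (h1 : ∀ a ∈ A, p1 a → p a) (h2 : ∀ a ∈ A, p2 a → p a)
    (hdisj : ∀ a ∈ A, p1 a → p2 a → False) :
    (A.filter p1).card + (A.filter p2).card ≤ (A.filter p).card := by
  classical
  have hadd := Multiset.filter_add_filter p1 p2 A
  have hzero : A.filter (fun a => p1 a ∧ p2 a) = 0 := by
    rw [Multiset.filter_eq_nil]
    exact fun a ha h => hdisj a ha h.1 h.2
  have hcongr : A.filter (fun a => p1 a ∨ p2 a)
      = A.filter (fun a => (p1 a ∨ p2 a) ∧ p a) := by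
    apply Multiset.filter_congr
    intro a ha
    constructor
    · intro h
      refine ⟨h, ?_⟩
      rcases h with h | h
      · exact h1 a ha h
      · exact h2 a ha h
    · exact And.left
  have hle : A.filter (fun a => p1 a ∨ p2 a) ≤ A.filter p := by
    rw [hcongr, ← Multiset.filter_filter]
    exact Multiset.filter_le _ _
  have hcards : (A.filter p1).card + (A.filter p2).card
      = (A.filter (fun a => p1 a ∨ p2 a)).card
        + (A.filter (fun a => p1 a ∧ p2 a)).card := by
    rw [← Multiset.card_add, ← Multiset.card_add, hadd]
  rw [hcards, hzero]
  simpa using Multiset.card_le_card hle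

private lemma rank_aux {S : Type*} [Fintype S] [DecidableEq S] (M : RankFn S)
    (P₁ P₂ Q T B : Finset S) (hQ : Q ⊆ P₁) (hT1 : T ⊆ P₁) (hT2 : T ⊆ P₂) (hB : B ⊆ P₂) :
    M.r (P₁ ∪ P₂) + M.r (Q ∪ T) + M.r B ≤ M.r P₁ + M.r P₂ + M.r (Q ∪ B) := by
  have e1 : P₁ ∪ (P₂ ∪ Q) = P₁ ∪ P₂ := by
    ext s
    simp only [Finset.mem_union]
    constructor
    · rintro (h | h | h)
      · exact Or.inl h
      · exact Or.inr h
      · exact Or.inl (hQ h)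
    · rintro (h | h)
      · exact Or.inl h
      · exact Or.inr (Or.inl h)
  have i1 : Q ∪ T ⊆ P₁ ∩ (P₂ ∪ Q) := by
    intro s hs
    rw [Finset.mem_union] at hs
    rw [Finset.mem_inter, Finset.mem_union]
    rcases hs with h | h
    · exact ⟨hQ h, Or.inr h⟩
    · exact ⟨hT1 h, Or.inl (hT2 h)⟩
  have m1 : M.r (P₁ ∪ P₂) + M.r (Q ∪ T) ≤ M.r P₁ + M.r (P₂ ∪ Q) := by
    have s1 := M.submodular P₁ (P₂ ∪ Q)
    rw [e1] at s1
    exact le_trans (add_le_add_right (M.mono i1) _) s1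
  have e2 : P₂ ∪ (Q ∪ B) = P₂ ∪ Q := by
    ext s
    simp only [Finset.mem_union]
    constructor
    · rintro (h | h | h)
      · exact Or.inl h
      · exact Or.inr h
      · exact Or.inl (hB h)
    · rintro (h | h)
      · exact Or.inl h
      · exact Or.inr (Or.inl h)
  have i2 : B ⊆ P₂ ∩ (Q ∪ B) := by
    intro s hs
    rw [Finset.mem_inter, Finset.mem_union]
    exact ⟨hB hs, Or.inr hs⟩
  have m2 : M.r (P₂ ∪ Q) + M.r B ≤ M.r P₂ + M.r (Q ∪ B) := by
    have s2 := M.submodular P₂ (Q ∪ B)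
    rw [e2] at s2
    exact le_trans (add_le_add_right (M.mono i2) _) s2
  omega

/-- Equivalence of Cs. Király's condition and the Gao–Yang condition for a digraph
`D = (V, A)`, a multiset `S` of `V` and a matroid `M` on `S`. -/
theorem kiraly_condition_iff_gao_yang_condition
    (V : Type) [Fintype V] [DecidableEq V]
    (A : Multiset (V × V)) (hA : ∀ a ∈ A, a.1 ≠ a.2)
    (S : Type) [Fintype S] [DecidableEq S] (π : S → V) (M : RankFn S) :
    (∀ X : Finset V,
        (M.r (Finset.univ.filter fun s => π s ∈ PD A X) : ℤ) -
            M.r (Finset.univ.filter fun s => π s ∈ X)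
          ≤ (inDeg A X : ℤ)) ↔
    (∀ C : Finset V, IsSCCD A C →
      ∀ X : Finset V, X ⊆ PD A C → (X ∩ C).Nonempty → inDeg A (X \ C) = 0 →
        (M.r (Finset.univ.filter fun s => π s ∈ PD A C) : ℤ) -
            M.r (Finset.univ.filter fun s => π s ∈ X)
          ≤ (inDeg A X : ℤ)) := by
  constructor
  · -- Király ⇒ Gao–Yang
    intro h C hC X hXP hXC _hd
    obtain ⟨w, hw⟩ := hC
    obtain ⟨x, hx⟩ := hXC
    obtain ⟨hxX, hxC⟩ := Finset.mem_inter.mp hx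
    have hwx : Reaches A w x := by
      have hx' := hxC
      rw [hw, Finset.mem_filter] at hx'
      exact hx'.2.2
    have hPC : PD A C ⊆ PD A X := by
      intro u hu
      obtain ⟨c, hcC, huc⟩ := mem_PD'.mp hu
      have hcw : Reaches A c w := by
        have hc' := hcC
        rw [hw, Finset.mem_filter] at hc'
        exact hc'.2.1
      exact mem_PD'.mpr ⟨x, hxX, (huc.trans hcw).trans hwx⟩
    have hmono : M.r (Finset.univ.filter fun s => π s ∈ PD A C)
        ≤ M.r (Finset.univ.filter fun s => π s ∈ PD A X) := by
      apply M.mono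
      intro s hs
      simp only [Finset.mem_filter, Finset.mem_univ, true_and] at hs ⊢
      exact hPC hs
    have hX := h X
    zify at hmono
    linarith
  · -- Gao–Yang ⇒ Király
    intro hGY
    have key : ∀ n : ℕ, ∀ X : Finset V, X.card ≤ n →
        (M.r (Finset.univ.filter fun s => π s ∈ PD A X) : ℤ) -
            M.r (Finset.univ.filter fun s => π s ∈ X) ≤ (inDeg A X : ℤ) := by
      intro n
      induction n with
      | zero =>
        intro X hX
        have hXe : X = ∅ := Finset.card_eq_zero.mp (Nat.le_zero.mp hX)
        subst hXe
        have hPDe : PD A (∅ : Finset V) = ∅ := by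
          ext u
          simp [mem_PD']
        rw [hPDe]
        simp only [sub_self]
        exact Int.natCast_nonneg _
      | succ n ih =>
        intro X hX
        rcases X.eq_empty_or_nonempty with rfl | hXne
        · exact ih ∅ (by simp)
        obtain ⟨x, hxX, hxmin⟩ := Finset.exists_min_image X (fun v => (QD A {v}).card) hXne
        -- the strongly connected component of x is a "sink" among components meeting X
        have hK : ∀ y ∈ X, Reaches A x y → Reaches A y x := by
          intro y hy hxy
          have hsub : QD A {y} ⊆ QD A {x} := by
            intro z hz
            obtain ⟨u, hu, huz⟩ := mem_QD'.mp hz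
            rw [Finset.mem_singleton] at hu
            exact mem_QD'.mpr ⟨x, Finset.mem_singleton_self x, hxy.trans (hu ▸ huz)⟩
          have heq : QD A {y} = QD A {x} :=
            Finset.eq_of_subset_of_card_le hsub (hxmin y hy)
          have hxQ : x ∈ QD A {x} :=
            mem_QD'.mpr ⟨x, Finset.mem_singleton_self x, Relation.ReflTransGen.refl⟩
          rw [← heq] at hxQ
          obtain ⟨u, hu, hux⟩ := mem_QD'.mp hxQ
          rw [Finset.mem_singleton] at hu
          exact hu ▸ hux
        set C : Finset V := Finset.univ.filter (fun u => Reaches A u x ∧ Reaches A x u)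
          with hCdef
        have mem_C : ∀ u, u ∈ C ↔ (Reaches A u x ∧ Reaches A x u) := by
          intro u
          rw [hCdef, Finset.mem_filter]
          simp
        have hC : IsSCCD A C := ⟨x, hCdef⟩
        have hxC : x ∈ C := (mem_C x).mpr ⟨Relation.ReflTransGen.refl, Relation.ReflTransGen.refl⟩
        set Y : Finset V := X \ C with hYdef
        set R : Finset V := Y.filter (fun u => ∃ v, (u, v) ∈ A ∧ v ∈ X ∧ v ∈ C) with hRdef
        set T : Finset V := PD A R \ C with hTdef
        set X' : Finset V := (X ∩ C) ∪ T with hX'def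
        have hPDR_x : ∀ u ∈ PD A R, Reaches A u x := by
          intro u hu
          obtain ⟨r, hrR, hur⟩ := mem_PD'.mp hu
          rw [hRdef, Finset.mem_filter] at hrR
          obtain ⟨-, v, hvA, -, hvC⟩ := hrR
          exact hur.trans ((Relation.ReflTransGen.single hvA).trans ((mem_C v).mp hvC).1)
        have hmemPDC : ∀ u, Reaches A u x → u ∈ PD A C := fun u hu => mem_PD'.mpr ⟨x, hxC, hu⟩
        have hTC : ∀ u ∈ T, u ∈ PD A R ∧ u ∉ C := by
          intro u hu
          rw [hTdef, Finset.mem_sdiff] at hu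
          exact hu
        have hnoT : ∀ a ∈ A, ¬ arcEnters a T := by
          rintro ⟨u, v⟩ ha ⟨hv, hu⟩
          obtain ⟨hvPDR, hvC⟩ := hTC v hv
          have huPDR : u ∈ PD A R := by
            obtain ⟨r, hr, hvr⟩ := mem_PD'.mp hvPDR
            exact mem_PD'.mpr ⟨r, hr, (Relation.ReflTransGen.single ha).trans hvr⟩
          have huC : u ∈ C := by
            by_contra hcon
            exact hu (by rw [hTdef, Finset.mem_sdiff]; exact ⟨huPDR, hcon⟩)
          exact hvC ((mem_C v).mpr ⟨hPDR_x v hvPDR,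
            ((mem_C u).mp huC).2.trans (Relation.ReflTransGen.single ha)⟩)
        have hX'PDC : X' ⊆ PD A C := by
          intro u hu
          rw [hX'def, Finset.mem_union] at hu
          rcases hu with hu | hu
          · exact hmemPDC u ((mem_C u).mp (Finset.mem_inter.mp hu).2).1
          · exact hmemPDC u (hPDR_x u (hTC u hu).1)
        have hX'C : X' \ C = T := by
          ext u
          rw [hX'def]
          simp only [Finset.mem_sdiff, Finset.mem_union, Finset.mem_inter]
          constructor
          · rintro ⟨h1 | h1, h2⟩
            · exact absurd h1.2 h2
            · exact h1
          · intro hu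
            exact ⟨Or.inr hu, (hTC u hu).2⟩
        have hd0 : inDeg A (X' \ C) = 0 := by
          rw [hX'C, inDeg, Multiset.card_eq_zero, Multiset.filter_eq_nil]
          exact hnoT
        have hxX' : x ∈ X' := by
          rw [hX'def]
          exact Finset.mem_union_left _ (Finset.mem_inter.mpr ⟨hxX, hxC⟩)
        have happ := hGY C hC X' hX'PDC ⟨x, Finset.mem_inter.mpr ⟨hxX', hxC⟩⟩ hd0
        have hYsub : Y ⊆ X := by
          rw [hYdef]
          exact Finset.sdiff_subset
        have hxY : x ∉ Y := by
          rw [hYdef, Finset.mem_sdiff]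
          exact fun hcon => hcon.2 hxC
        have hYcard : Y.card ≤ n := by
          have hss : Y ⊂ X := (Finset.ssubset_iff_of_subset hYsub).mpr ⟨x, hxX, hxY⟩
          have := Finset.card_lt_card hss
          omega
        have hIH := ih Y hYcard
        -- arc counting
        have claim1 : ∀ a ∈ A, arcEnters a X' → arcEnters a X ∧ a.2 ∈ C := by
          rintro ⟨u, v⟩ ha ⟨hv, hu⟩
          have hv' : v ∈ X ∩ C ∨ v ∈ T := by
            rw [hX'def, Finset.mem_union] at hv
            exact hv
          rcases hv' with hv' | hv'
          · obtain ⟨hvX, hvC⟩ := Finset.mem_inter.mp hv'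
            have huX : u ∉ X := by
              intro huX
              by_cases huC : u ∈ C
              · refine hu ?_
                rw [hX'def]
                exact Finset.mem_union_left _ (Finset.mem_inter.mpr ⟨huX, huC⟩)
              · have huR : u ∈ R := by
                  rw [hRdef, Finset.mem_filter]
                  exact ⟨by rw [hYdef, Finset.mem_sdiff]; exact ⟨huX, huC⟩, ⟨v, ha, hvX, hvC⟩⟩
                have huT : u ∈ T := by
                  rw [hTdef, Finset.mem_sdiff]
                  exact ⟨mem_PD'.mpr ⟨u, huR, Relation.ReflTransGen.refl⟩, huC⟩
                exact hu (by rw [hX'def]; exact Finset.mem_union_right _ huT)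
            exact ⟨⟨hvX, huX⟩, hvC⟩
          · refine absurd ⟨hv', fun huT => hu ?_⟩ (hnoT (u, v) ha)
            rw [hX'def]
            exact Finset.mem_union_right _ huT
        have claim2 : ∀ a ∈ A, arcEnters a Y → arcEnters a X ∧ a.2 ∉ C := by
          rintro ⟨u, v⟩ ha ⟨hv, hu⟩
          have hv' : v ∈ X ∧ v ∉ C := by
            rw [hYdef, Finset.mem_sdiff] at hv
            exact hv
          have huC : u ∉ C := by
            intro huC
            have hxv : Reaches A x v :=
              ((mem_C u).mp huC).2.trans (Relation.ReflTransGen.single ha)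
            exact hv'.2 ((mem_C v).mpr ⟨hK v hv'.1 hxv, hxv⟩)
          have huX : u ∉ X := fun huX =>
            hu (by rw [hYdef, Finset.mem_sdiff]; exact ⟨huX, huC⟩)
          exact ⟨⟨hv'.1, huX⟩, hv'.2⟩
        have hcount : inDeg A X' + inDeg A Y ≤ inDeg A X := by
          unfold inDeg
          exact count_aux A _ _ _ (fun a ha h => (claim1 a ha h).1)
            (fun a ha h => (claim2 a ha h).1)
            (fun a ha h1 h2 => (claim2 a ha h2).2 (claim1 a ha h1).2)
        -- rank side
        have hfil_mono : ∀ {Z Z' : Finset V}, Z ⊆ Z' →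
            (Finset.univ.filter fun s => π s ∈ Z) ⊆ (Finset.univ.filter fun s => π s ∈ Z') := by
          intro Z Z' hZZ s hs
          simp only [Finset.mem_filter, Finset.mem_univ, true_and] at hs ⊢
          exact hZZ hs
        have hsub1 : X ∩ C ⊆ PD A C := fun u hu =>
          hmemPDC u ((mem_C u).mp (Finset.mem_inter.mp hu).2).1
        have hsub2 : T ⊆ PD A C := fun u hu => hmemPDC u (hPDR_x u (hTC u hu).1)
        have hsub3 : T ⊆ PD A Y := by
          intro u hu
          obtain ⟨r, hrR, hur⟩ := mem_PD'.mp (hTC u hu).1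
          rw [hRdef] at hrR
          exact mem_PD'.mpr ⟨r, Finset.mem_of_mem_filter r hrR, hur⟩
        have hsub4 : Y ⊆ PD A Y := fun u hu =>
          mem_PD'.mpr ⟨u, hu, Relation.ReflTransGen.refl⟩
        have hrank := rank_aux M
          (Finset.univ.filter fun s => π s ∈ PD A C)
          (Finset.univ.filter fun s => π s ∈ PD A Y)
          (Finset.univ.filter fun s => π s ∈ X ∩ C)
          (Finset.univ.filter fun s => π s ∈ T)
          (Finset.univ.filter fun s => π s ∈ Y)
          (hfil_mono hsub1) (hfil_mono hsub2) (hfil_mono hsub3) (hfil_mono hsub4)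
        have hU1 : (Finset.univ.filter fun s => π s ∈ X ∩ C) ∪ (Finset.univ.filter fun s => π s ∈ T)
            = Finset.univ.filter fun s => π s ∈ X' := by
          ext s
          rw [hX'def]
          simp only [Finset.mem_union, Finset.mem_filter, Finset.mem_univ, true_and]
        have hU2 : (Finset.univ.filter fun s => π s ∈ X ∩ C) ∪ (Finset.univ.filter fun s => π s ∈ Y)
            = Finset.univ.filter fun s => π s ∈ X := by
          ext s
          rw [hYdef]
          simp only [Finset.mem_union, Finset.mem_filter, Finset.mem_univ, true_and,
            Finset.mem_inter, Finset.mem_sdiff]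
          tauto
        rw [hU1, hU2] at hrank
        have hPDsplit : PD A X ⊆ PD A C ∪ PD A Y := by
          intro u hu
          obtain ⟨v, hvX, huv⟩ := mem_PD'.mp hu
          by_cases hvC : v ∈ C
          · exact Finset.mem_union_left _ (mem_PD'.mpr ⟨v, hvC, huv⟩)
          · exact Finset.mem_union_right _
              (mem_PD'.mpr ⟨v, by rw [hYdef, Finset.mem_sdiff]; exact ⟨hvX, hvC⟩, huv⟩)
        have hm0 : M.r (Finset.univ.filter fun s => π s ∈ PD A X)
            ≤ M.r ((Finset.univ.filter fun s => π s ∈ PD A C)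
                ∪ (Finset.univ.filter fun s => π s ∈ PD A Y)) := by
          apply M.mono
          intro s hs
          simp only [Finset.mem_filter, Finset.mem_univ, true_and] at hs
          rcases Finset.mem_union.mp (hPDsplit hs) with hcase | hcase
          · exact Finset.mem_union_left _ (by
              simp only [Finset.mem_filter, Finset.mem_univ, true_and]; exact hcase)
          · exact Finset.mem_union_right _ (by
              simp only [Finset.mem_filter, Finset.mem_univ, true_and]; exact hcase)
        zify at hrank hm0 hcount
        linarith
    intro X
    exact key X.card X le_rfl


end ArborPaper
end
end
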